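/- Let f : Θ → ℝ on a finite set Θ and let ν be a probability measure with ν(f⁻¹(y₁)) = α and ν(f⁻¹(y₂)) = 1−α for distinct y₁, y₂ and α ∈ (0,1), where supp(ν) ∩ f⁻¹(y₁) contains at least two points. Then ν can be written as a nontrivial mixture ν = ∫ ν_θ dP(θ) where P is the conditional of ν on f⁻¹(y₁), and for each θ ∈ supp(ν) ∩ f⁻¹(y₁), ν_θ = α δ_θ + (restriction of ν to f⁻¹(y₂)); each ν_θ satisfies E_{ν_θ}[f] = E_ν[f], and at least two of the ν_θ are distinct. -/
import Mathlib


open Finset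

open scoped Classical in
/-- A posterior putting mass α on a non-singleton part of the level set f⁻¹(y₁) (and 1-α on
f⁻¹(y₂)) is a nontrivial mixture of the posteriors ν_θ = α δ_θ + ν|_{f⁻¹(y₂)}, each having
the same posterior mean of f, with at least two of them distinct. -/
theorem stmt_14 {Θ : Type*} [Fintype Θ] [DecidableEq Θ] (f : Θ → ℝ)
    (ν : Θ → ℝ) (hνnn : ∀ θ, 0 ≤ ν θ) (hνone : ∑ θ, ν θ = 1)
    (y₁ y₂ : ℝ) (hy : y₁ ≠ y₂) (α : ℝ) (hα0 : 0 < α) (hα1 : α < 1)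
    (hm1 : ∑ θ ∈ Finset.univ.filter (fun θ => f θ = y₁), ν θ = α)
    (hm2 : ∑ θ ∈ Finset.univ.filter (fun θ => f θ = y₂), ν θ = 1 - α)
    (θa θb : Θ) (hab : θa ≠ θb) (hfa : f θa = y₁) (hfb : f θb = y₁)
    (hνa : 0 < ν θa) (hνb : 0 < ν θb)
    (νθ : Θ → Θ → ℝ)
    (hνθ : ∀ θ θ', νθ θ θ' =
      (if θ' = θ then α else 0) + (if f θ' = y₂ then ν θ' else 0)) :
    (∀ θ', ν θ' = ∑ θ ∈ Finset.univ.filter (fun θ => f θ = y₁), (ν θ / α) * νθ θ θ') ∧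
    (∀ θ, f θ = y₁ →
      (∀ θ', 0 ≤ νθ θ θ') ∧ ∑ θ', νθ θ θ' = 1 ∧
      ∑ θ', f θ' * νθ θ θ' = ∑ θ', f θ' * ν θ') ∧
    νθ θa ≠ νθ θb := by
  classical
  have hαne : α ≠ 0 := ne_of_gt hα0
  set S₁ := Finset.univ.filter (fun θ => f θ = y₁) with hS₁
  set S₂ := Finset.univ.filter (fun θ => f θ = y₂) with hS₂
  have hdisj : Disjoint S₁ S₂ := by
    rw [Finset.disjoint_left]
    intro a ha hb
    simp only [hS₁, hS₂, Finset.mem_filter] at ha hb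
    exact hy (ha.2 ▸ hb.2)
  have htot : ∑ θ ∈ S₁ ∪ S₂, ν θ = 1 := by
    rw [Finset.sum_union hdisj, hm1, hm2]; ring
  have hcompl : ∑ θ ∈ (S₁ ∪ S₂)ᶜ, ν θ = 0 := by
    have h := Finset.sum_compl_add_sum (S₁ ∪ S₂) ν
    rw [htot, hνone] at h; linarith
  have hrest : ∀ θ, f θ ≠ y₁ → f θ ≠ y₂ → ν θ = 0 := by
    intro θ h1 h2
    refine (Finset.sum_eq_zero_iff_of_nonneg (fun i _ => hνnn i)).mp hcompl θ ?_
    simp [hS₁, hS₂, h1, h2]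
  -- sum over S₁ of ν/α is 1
  have hsumdiv : ∑ θ ∈ S₁, ν θ / α = 1 := by
    rw [← Finset.sum_div, hm1, div_self hαne]
  refine ⟨?_, ?_, ?_⟩
  · intro θ'
    have : ∑ θ ∈ S₁, (ν θ / α) * νθ θ θ' =
        (∑ θ ∈ S₁, if θ' = θ then (ν θ / α) * α else 0) +
        (∑ θ ∈ S₁, (ν θ / α)) * (if f θ' = y₂ then ν θ' else 0) := by
      rw [Finset.sum_mul, ← Finset.sum_add_distrib]
      refine Finset.sum_congr rfl fun θ _ => ?_
      rw [hνθ]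
      by_cases h : θ' = θ <;> simp [h, mul_add]
    rw [this, Finset.sum_ite_eq S₁ θ' (fun θ => ν θ / α * α), hsumdiv, one_mul]
    by_cases h1 : f θ' = y₁
    · have hmem : θ' ∈ S₁ := by simp [hS₁, h1]
      have h2 : f θ' ≠ y₂ := h1 ▸ hy
      rw [if_pos hmem, if_neg h2, div_mul_cancel₀ _ hαne, add_zero]
    · have hmem : θ' ∉ S₁ := by simp [hS₁, h1]
      rw [if_neg hmem, zero_add]
      by_cases h2 : f θ' = y₂
      · rw [if_pos h2]
      · rw [if_neg h2, hrest θ' h1 h2]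
  · intro θ hθ
    have hθ2 : f θ ≠ y₂ := hθ ▸ hy
    refine ⟨?_, ?_, ?_⟩
    · intro θ'
      rw [hνθ]
      have := hνnn θ'
      positivity
    · have : ∑ θ', νθ θ θ' =
          (∑ θ', if θ' = θ then α else 0) + ∑ θ' ∈ S₂, ν θ' := by
        simp only [hνθ, Finset.sum_add_distrib]
        congr 1
        rw [hS₂, Finset.sum_filter]
      rw [this, Finset.sum_ite_eq' Finset.univ θ (fun _ => α)]
      simp [hm2]
    · have hL : ∑ θ', f θ' * νθ θ θ' = y₁ * α + y₂ * (1 - α) := by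
        have : ∑ θ', f θ' * νθ θ θ' =
            (∑ θ', if θ' = θ then f θ' * α else 0) +
            ∑ θ' ∈ S₂, f θ' * ν θ' := by
          simp only [hνθ, mul_add, Finset.sum_add_distrib, mul_ite, mul_zero]
          congr 1
          rw [hS₂, Finset.sum_filter]
        rw [this, Finset.sum_ite_eq' Finset.univ θ (fun θ' => f θ' * α), if_pos (Finset.mem_univ θ), hθ]
        congr 1
        calc ∑ θ' ∈ S₂, f θ' * ν θ' = ∑ θ' ∈ S₂, y₂ * ν θ' := by
              refine Finset.sum_congr rfl fun x hx => ?_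
              simp only [hS₂, Finset.mem_filter] at hx
              rw [hx.2]
          _ = y₂ * (1 - α) := by rw [← Finset.mul_sum, hm2]
      have hR : ∑ θ', f θ' * ν θ' = y₁ * α + y₂ * (1 - α) := by
        have hsplit := Finset.sum_compl_add_sum (S₁ ∪ S₂) (fun θ' => f θ' * ν θ')
        have hc0 : ∑ θ' ∈ (S₁ ∪ S₂)ᶜ, f θ' * ν θ' = 0 := by
          refine Finset.sum_eq_zero fun x hx => ?_
          simp only [Finset.mem_compl, Finset.mem_union, hS₁, hS₂, Finset.mem_filter,
            Finset.mem_univ, true_and, not_or] at hx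
          rw [hrest x hx.1 hx.2, mul_zero]
        have h1 : ∑ θ' ∈ S₁, f θ' * ν θ' = y₁ * α := by
          calc ∑ θ' ∈ S₁, f θ' * ν θ' = ∑ θ' ∈ S₁, y₁ * ν θ' := by
                refine Finset.sum_congr rfl fun x hx => ?_
                simp only [hS₁, Finset.mem_filter] at hx
                rw [hx.2]
            _ = y₁ * α := by rw [← Finset.mul_sum, hm1]
        have h2 : ∑ θ' ∈ S₂, f θ' * ν θ' = y₂ * (1 - α) := by
          calc ∑ θ' ∈ S₂, f θ' * ν θ' = ∑ θ' ∈ S₂, y₂ * ν θ' := by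
                refine Finset.sum_congr rfl fun x hx => ?_
                simp only [hS₂, Finset.mem_filter] at hx
                rw [hx.2]
            _ = y₂ * (1 - α) := by rw [← Finset.mul_sum, hm2]
        rw [Finset.sum_union hdisj, hc0, h1, h2, zero_add] at hsplit
        exact hsplit.symm
      rw [hL, hR]
  · intro h
    have h1 : νθ θa θa = α := by
      rw [hνθ, if_pos rfl, if_neg (hfa ▸ hy)]; ring
    have h2 : νθ θb θa = 0 := by
      rw [hνθ, if_neg hab, if_neg (hfa ▸ hy)]; ring
    rw [h, h2] at h1
    exact hαne h1.symm
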